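/- Let N ∈ k^σ[X^r] be a monic irreducible polynomial different from X^r, and let E = k^σ[X^r]/(N). Then the centre of the quotient ring k[X,σ]/(N) is exactly E, i.e., the image of k^σ[X^r] in the quotient. -/

import Mathlib

/-- A ring `R` together with a ring embedding `ι : k →+* R` and an element `X : R` is
*the* skew polynomial ring `k[X,σ]` if `X * ι a = ι (σ a) * X` for all `a : k` and every
element of `R` can be written uniquely as a finite sum `∑ ι aᵢ * X ^ i`. -/
structure IsSkewPolyRing (k : Type*) [Field k] (σ : k ≃+* k)
    (R : Type*) [Ring R] (ι : k →+* R) (X : R) : Prop where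
  X_mul : ∀ a : k, X * ι a = ι (σ a) * X
  repr_unique : ∀ y : R, ∃! c : ℕ →₀ k, y = c.sum fun i a => ι a * X ^ i

namespace IsSkewPolyRing

variable {k : Type*} [Field k] {σ : k ≃+* k} {R : Type*} [Ring R] {ι : k →+* R} {X : R}

/-- The coefficients of a skew polynomial. -/
noncomputable def repr (h : IsSkewPolyRing k σ R ι X) (y : R) : ℕ →₀ k :=
  (h.repr_unique y).exists.choose

/-- `y` has degree at most `n`. -/
def degLE (h : IsSkewPolyRing k σ R ι X) (y : R) (n : ℕ) : Prop :=
  ∀ i, n < i → h.repr y i = 0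

/-- `y` is monic of degree `d`. -/
def MonicOfDegree (h : IsSkewPolyRing k σ R ι X) (y : R) (d : ℕ) : Prop :=
  h.repr y d = 1 ∧ h.degLE y d

/-- `y` is monic. -/
def Monic (h : IsSkewPolyRing k σ R ι X) (y : R) : Prop := ∃ d, h.MonicOfDegree y d

/-- The matrix of right multiplication by `P` on `k[X,σ]`, viewed as a free module of
rank `r` over `k[X^r]` (identified with `Polynomial k` via `X^r ↦ Y`), in the basis
`1, X, …, X^(r-1)`. -/
noncomputable def normMatrix (h : IsSkewPolyRing k σ R ι X) (r : ℕ) (P : R) :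
    Matrix (Fin r) (Fin r) (Polynomial k) :=
  fun l j => ∑ i ∈ (h.repr P).support,
    if (i + (j : ℕ)) % r = (l : ℕ) then
      Polynomial.monomial ((i + (j : ℕ)) / r) ((σ ^ (j : ℕ)) (h.repr P i))
    else 0

/-- The reduced norm of a skew polynomial `P`: the determinant of right multiplication
by `P` on `k[X,σ]` viewed as a free `k[X^r]`-module of rank `r`, written as a
(commutative) polynomial in the variable `X^r`. -/
noncomputable def norm (h : IsSkewPolyRing k σ R ι X) (r : ℕ) (P : R) : Polynomial k :=
  (h.normMatrix r P).det

end IsSkewPolyRing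

/-- The fixed subfield `k^σ` of an automorphism `σ` of `k`. -/
def fixedSubfield {k : Type*} [Field k] (σ : k ≃+* k) : Subfield k where
  carrier := {a | σ a = a}
  mul_mem' := by intro a b ha hb; simp_all [Set.mem_setOf_eq]
  one_mem' := map_one σ
  add_mem' := by intro a b ha hb; simp_all [Set.mem_setOf_eq]
  zero_mem' := map_zero σ
  neg_mem' := by intro a ha; simp_all [Set.mem_setOf_eq]
  inv_mem' := by intro a ha; simp_all [Set.mem_setOf_eq]

/-- The element of `k[X,σ]` corresponding to a commutative polynomial with
coefficients in the fixed field `k^σ`, via the substitution `Y ↦ X^r`; these are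
exactly the elements of `k^σ[X^r]`. -/
noncomputable def centralElt {k : Type*} [Field k] (σ : k ≃+* k)
    {R : Type*} [Ring R] (ι : k →+* R) (X : R) (r : ℕ)
    (f : Polynomial (fixedSubfield σ)) : R :=
  Polynomial.eval₂ (ι.comp (fixedSubfield σ).subtype) (X ^ r) f

namespace SkewAux

variable {k : Type*} [Field k] {σ : k ≃+* k} {R : Type*} [Ring R]

lemma sigma_pow_succ (σ : k ≃+* k) (n : ℕ) (b : k) : (σ ^ (n + 1)) b = (σ ^ n) (σ b) := by
  rw [pow_succ]; rfl

lemma sigma_pow_succ' (σ : k ≃+* k) (n : ℕ) (b : k) : (σ ^ (n + 1)) b = σ ((σ ^ n) b) := by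
  rw [pow_succ']; rfl

lemma sum_skew_zero (ι : k →+* R) (X : R) (i : ℕ) : ι (0 : k) * X ^ i = 0 := by simp

/-- The additive hom sending coefficients to `∑ ι aᵢ * X^i`. -/
noncomputable def skewHom (ι : k →+* R) (X : R) : (ℕ →₀ k) →+ R where
  toFun c := c.sum fun i a => ι a * X ^ i
  map_zero' := Finsupp.sum_zero_index
  map_add' c d := by
    show (c + d).sum (fun i a => ι a * X ^ i) = _
    exact Finsupp.sum_add_index' (fun i => sum_skew_zero ι X i)
      (fun i a b => by rw [map_add, add_mul])

lemma skewHom_apply (ι : k →+* R) (X : R) (c : ℕ →₀ k) :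
    skewHom ι X c = c.sum fun i a => ι a * X ^ i := rfl

lemma skewHom_single (ι : k →+* R) (X : R) (i : ℕ) (a : k) :
    skewHom ι X (Finsupp.single i a) = ι a * X ^ i := by
  rw [skewHom_apply]
  exact Finsupp.sum_single_index (sum_skew_zero ι X i)

end SkewAux

namespace IsSkewPolyRing

open SkewAux

variable {k : Type*} [Field k] {σ : k ≃+* k} {R : Type*} [Ring R] {ι : k →+* R} {X : R}

theorem repr_spec (h : IsSkewPolyRing k σ R ι X) (y : R) : y = skewHom ι X (h.repr y) :=
  (h.repr_unique y).exists.choose_spec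

theorem repr_eq (h : IsSkewPolyRing k σ R ι X) {y : R} {c : ℕ →₀ k}
    (hy : y = skewHom ι X c) : h.repr y = c :=
  (h.repr_unique y).unique (h.repr_spec y) hy

theorem repr_skewHom (h : IsSkewPolyRing k σ R ι X) (c : ℕ →₀ k) :
    h.repr (skewHom ι X c) = c := h.repr_eq rfl

theorem repr_sub (h : IsSkewPolyRing k σ R ι X) (y z : R) :
    h.repr (y - z) = h.repr y - h.repr z := by
  refine h.repr_eq ?_
  rw [map_sub, ← h.repr_spec y, ← h.repr_spec z]

theorem repr_zero (h : IsSkewPolyRing k σ R ι X) : h.repr 0 = 0 :=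
  h.repr_eq (map_zero _).symm

theorem eq_zero_of_repr (h : IsSkewPolyRing k σ R ι X) {y : R} (hy : h.repr y = 0) : y = 0 := by
  have hs := h.repr_spec y
  rw [hy, map_zero] at hs
  exact hs

theorem X_pow_mul (h : IsSkewPolyRing k σ R ι X) (i : ℕ) (b : k) :
    X ^ i * ι b = ι ((σ ^ i) b) * X ^ i := by
  induction i with
  | zero => simp
  | succ n ih =>
    rw [pow_succ', mul_assoc, ih, ← mul_assoc, h.X_mul, mul_assoc, sigma_pow_succ' σ n b]

theorem monomial_mul (h : IsSkewPolyRing k σ R ι X) (p q : ℕ) (a b : k) :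
    (ι a * X ^ p) * (ι b * X ^ q) = ι (a * (σ ^ p) b) * X ^ (p + q) := by
  rw [mul_assoc, ← mul_assoc (X ^ p), h.X_pow_mul, map_mul, mul_assoc, mul_assoc, pow_add]

end IsSkewPolyRing
namespace SkewAux

variable {k : Type*} [Field k] {σ : k ≃+* k} {R : Type*} [Ring R] {ι : k →+* R} {X : R}

/-- Skew convolution of coefficient functions. -/
noncomputable def conv (σ : k ≃+* k) (c d : ℕ →₀ k) : ℕ →₀ k :=
  c.sum fun p a => d.sum fun q b => Finsupp.single (p + q) (a * (σ ^ p) b)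

lemma conv_apply_bound {c d : ℕ →₀ k} {m n : ℕ}
    (hc : ∀ i, m < i → c i = 0) (hd : ∀ j, n < j → d j = 0)
    {t : ℕ} (ht : m + n < t) : conv σ c d t = 0 := by
  rw [conv, Finsupp.sum, Finsupp.finset_sum_apply]
  refine Finset.sum_eq_zero fun p hp => ?_
  rw [Finsupp.sum, Finsupp.finset_sum_apply]
  refine Finset.sum_eq_zero fun q hq => ?_
  have hpm : p ≤ m := by
    by_contra hx
    exact Finsupp.mem_support_iff.1 hp (hc p (lt_of_not_ge hx))
  have hqn : q ≤ n := by
    by_contra hx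
    exact Finsupp.mem_support_iff.1 hq (hd q (lt_of_not_ge hx))
  rw [Finsupp.single_apply, if_neg]
  omega

lemma conv_apply_top {c d : ℕ →₀ k} {m n : ℕ}
    (hc : ∀ i, m < i → c i = 0) (hd : ∀ j, n < j → d j = 0) :
    conv σ c d (m + n) = c m * (σ ^ m) (d n) := by
  rw [conv, Finsupp.sum, Finsupp.finset_sum_apply]
  rw [Finset.sum_eq_single m]
  · rw [Finsupp.sum, Finsupp.finset_sum_apply, Finset.sum_eq_single n]
    · rw [Finsupp.single_apply, if_pos rfl]
    · intro q hq hqn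
      have : q ≤ n := by
        by_contra hx
        exact Finsupp.mem_support_iff.1 hq (hd q (lt_of_not_ge hx))
      rw [Finsupp.single_apply, if_neg (by omega)]
    · intro hn
      rw [Finsupp.notMem_support_iff.1 hn]
      simp
  · intro p hp hpm
    have hple : p ≤ m := by
      by_contra hx
      exact Finsupp.mem_support_iff.1 hp (hc p (lt_of_not_ge hx))
    rw [Finsupp.sum, Finsupp.finset_sum_apply]
    refine Finset.sum_eq_zero fun q hq => ?_
    have hqn : q ≤ n := by
      by_contra hx
      exact Finsupp.mem_support_iff.1 hq (hd q (lt_of_not_ge hx))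
    rw [Finsupp.single_apply, if_neg (by omega)]
  · intro hm
    rw [Finsupp.notMem_support_iff.1 hm]
    simp

lemma conv_apply_zero (c d : ℕ →₀ k) : conv σ c d 0 = c 0 * d 0 := by
  rw [conv, Finsupp.sum, Finsupp.finset_sum_apply]
  rw [Finset.sum_eq_single 0]
  · rw [Finsupp.sum, Finsupp.finset_sum_apply, Finset.sum_eq_single 0]
    · rw [Finsupp.single_apply, if_pos rfl, pow_zero]
      rfl
    · intro q hq hq0
      rw [Finsupp.single_apply, if_neg (by omega)]
    · intro hn
      rw [Finsupp.notMem_support_iff.1 hn]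
      simp
  · intro p hp hp0
    rw [Finsupp.sum, Finsupp.finset_sum_apply]
    refine Finset.sum_eq_zero fun q hq => ?_
    rw [Finsupp.single_apply, if_neg (by omega)]
  · intro hm
    rw [Finsupp.notMem_support_iff.1 hm]
    simp

end SkewAux

namespace IsSkewPolyRing

open SkewAux

variable {k : Type*} [Field k] {σ : k ≃+* k} {R : Type*} [Ring R] {ι : k →+* R} {X : R}

theorem skewHom_mul (h : IsSkewPolyRing k σ R ι X) (c d : ℕ →₀ k) :
    skewHom ι X c * skewHom ι X d = skewHom ι X (conv σ c d) := by
  rw [conv, map_finsuppSum]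
  rw [skewHom_apply ι X c, Finsupp.sum_mul]
  refine Finsupp.sum_congr fun p hp => ?_
  rw [map_finsuppSum, skewHom_apply ι X d, Finsupp.mul_sum]
  refine Finsupp.sum_congr fun q hq => ?_
  rw [skewHom_single, h.monomial_mul]

theorem repr_mul (h : IsSkewPolyRing k σ R ι X) (y z : R) :
    h.repr (y * z) = conv σ (h.repr y) (h.repr z) := by
  refine h.repr_eq ?_
  rw [← h.skewHom_mul, ← h.repr_spec y, ← h.repr_spec z]

end IsSkewPolyRing
namespace SkewAux

variable {k : Type*} [Field k] {σ : k ≃+* k} {R : Type*} [Ring R] {ι : k →+* R} {X : R}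

/-- Right twist of coefficients by `a`. -/
noncomputable def twist (σ : k ≃+* k) (a : k) (c : ℕ →₀ k) : ℕ →₀ k :=
  Finsupp.onFinset c.support (fun i => c i * (σ ^ i) a)
    (fun i hi => Finsupp.mem_support_iff.2 (fun h0 => hi (by simp [h0])))

lemma twist_apply (a : k) (c : ℕ →₀ k) (i : ℕ) : twist σ a c i = c i * (σ ^ i) a :=
  Finsupp.onFinset_apply

/-- Shift of coefficients. -/
noncomputable def shift (c : ℕ →₀ k) : ℕ →₀ k := Finsupp.mapDomain Nat.succ c

lemma shift_apply_succ (c : ℕ →₀ k) (i : ℕ) : shift c (i + 1) = c i :=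
  Finsupp.mapDomain_apply Nat.succ_injective c i

lemma shift_apply_zero (c : ℕ →₀ k) : shift c 0 = 0 :=
  Finsupp.mapDomain_notin_range c 0 (by rintro ⟨n, hn⟩; exact Nat.succ_ne_zero n hn)

end SkewAux

namespace IsSkewPolyRing

open SkewAux

variable {k : Type*} [Field k] {σ : k ≃+* k} {R : Type*} [Ring R] {ι : k →+* R} {X : R}

theorem iota_mul_skewHom (h : IsSkewPolyRing k σ R ι X) (a : k) (c : ℕ →₀ k) :
    ι a * skewHom ι X c = skewHom ι X (a • c) := by
  rw [skewHom_apply ι X c, skewHom_apply ι X (a • c),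
    Finsupp.sum_smul_index (fun i => sum_skew_zero ι X i), Finsupp.mul_sum]
  exact Finsupp.sum_congr fun i hi => by rw [map_mul, mul_assoc]

theorem skewHom_mul_iota (h : IsSkewPolyRing k σ R ι X) (a : k) (c : ℕ →₀ k) :
    skewHom ι X c * ι a = skewHom ι X (twist σ a c) := by
  rw [skewHom_apply ι X c, Finsupp.sum_mul, skewHom_apply,
    Finsupp.sum_of_support_subset (twist σ a c) Finsupp.support_onFinset_subset _
      (fun i _ => sum_skew_zero ι X i), Finsupp.sum]
  refine Finset.sum_congr rfl fun i hi => ?_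
  rw [twist_apply, map_mul, mul_assoc, h.X_pow_mul, ← mul_assoc]

theorem skewHom_mul_X (h : IsSkewPolyRing k σ R ι X) (c : ℕ →₀ k) :
    skewHom ι X c * X = skewHom ι X (shift c) := by
  rw [skewHom_apply ι X c, skewHom_apply ι X (shift c), shift,
    Finsupp.sum_mapDomain_index (fun i => by simp)
      (fun i a b => by rw [map_add, add_mul]),
    Finsupp.sum_mul]
  exact Finsupp.sum_congr fun i hi => by rw [mul_assoc, ← pow_succ]


theorem X_mul_skewHom (h : IsSkewPolyRing k σ R ι X) (c : ℕ →₀ k) :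
    X * skewHom ι X c = skewHom ι X (shift (c.mapRange σ (map_zero σ))) := by
  rw [skewHom_apply ι X c, skewHom_apply, shift,
    Finsupp.sum_mapDomain_index (fun i => by simp)
      (fun i a b => by rw [map_add, add_mul]),
    Finsupp.sum_mapRange_index (fun i => by simp),
    Finsupp.mul_sum]
  refine Finsupp.sum_congr fun i hi => ?_
  rw [← mul_assoc, h.X_mul, mul_assoc, ← pow_succ']

end IsSkewPolyRing
namespace SkewAux

variable {k : Type*} [Field k] {σ : k ≃+* k} {R : Type*} [Ring R] {ι : k →+* R} {X : R}

/-- The coefficient finsupp of a central element. -/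
noncomputable def centralFinsupp (σ : k ≃+* k) (r : ℕ) (g : Polynomial (fixedSubfield σ)) :
    ℕ →₀ k :=
  Finsupp.mapDomain (r * ·) (Finsupp.mapRange Subtype.val rfl g.toFinsupp.coeff)

lemma rmul_injective {r : ℕ} (hr0 : 0 < r) : Function.Injective (r * ·) := fun a b hab => by
  simpa using Nat.eq_of_mul_eq_mul_left hr0 hab

lemma centralFinsupp_apply_mul {r : ℕ} (hr0 : 0 < r) (g : Polynomial (fixedSubfield σ)) (i : ℕ) :
    centralFinsupp σ r g (r * i) = (g.coeff i : k) := by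
  rw [centralFinsupp, Finsupp.mapDomain_apply (rmul_injective hr0), Finsupp.mapRange_apply,
    Polynomial.toFinsupp_apply]

lemma centralFinsupp_apply_not_dvd {r : ℕ} (g : Polynomial (fixedSubfield σ)) {t : ℕ}
    (ht : ¬ r ∣ t) : centralFinsupp σ r g t = 0 := by
  rw [centralFinsupp, Finsupp.mapDomain_notin_range]
  rintro ⟨i, hi⟩
  exact ht ⟨i, hi.symm⟩

lemma centralFinsupp_fixed {r : ℕ} (hr0 : 0 < r) (g : Polynomial (fixedSubfield σ)) (t : ℕ) :
    σ (centralFinsupp σ r g t) = centralFinsupp σ r g t := by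
  by_cases hdvd : r ∣ t
  · obtain ⟨i, rfl⟩ := hdvd
    rw [centralFinsupp_apply_mul hr0]
    exact (g.coeff i).2
  · rw [centralFinsupp_apply_not_dvd g hdvd, map_zero]

lemma centralFinsupp_dvd {r : ℕ} (g : Polynomial (fixedSubfield σ)) {t : ℕ}
    (ht : centralFinsupp σ r g t ≠ 0) : r ∣ t := by
  by_contra hx
  exact ht (centralFinsupp_apply_not_dvd g hx)

lemma centralFinsupp_bound {r : ℕ} (hr0 : 0 < r) (g : Polynomial (fixedSubfield σ)) (t : ℕ)
    (ht : r * g.natDegree < t) : centralFinsupp σ r g t = 0 := by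
  by_contra hx
  have hts : t ∈ (centralFinsupp σ r g).support := Finsupp.mem_support_iff.2 hx
  rw [centralFinsupp] at hts
  classical
  have := Finsupp.mapDomain_support hts
  rw [Finset.mem_image] at this
  obtain ⟨i, hi, rfl⟩ := this
  have hi2 : (Finsupp.mapRange Subtype.val rfl g.toFinsupp.coeff) i ≠ 0 := Finsupp.mem_support_iff.1 hi
  rw [Finsupp.mapRange_apply, Polynomial.toFinsupp_apply] at hi2
  have : g.coeff i ≠ 0 := fun hc => hi2 (by rw [hc]; rfl)
  have := Polynomial.le_natDegree_of_ne_zero this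
  have : r * i ≤ r * g.natDegree := Nat.mul_le_mul_left r this
  omega

end SkewAux

namespace IsSkewPolyRing

open SkewAux

variable {k : Type*} [Field k] {σ : k ≃+* k} {R : Type*} [Ring R] {ι : k →+* R} {X : R}

theorem centralElt_eq (h : IsSkewPolyRing k σ R ι X) {r : ℕ} (hr0 : 0 < r)
    (g : Polynomial (fixedSubfield σ)) :
    centralElt σ ι X r g = skewHom ι X (centralFinsupp σ r g) := by
  rw [centralElt, Polynomial.eval₂_eq_sum, Polynomial.sum_def, skewHom_apply, centralFinsupp,
    Finsupp.sum_mapDomain_index (fun i => by simp)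
      (fun i a b => by rw [map_add, add_mul]),
    Finsupp.sum_mapRange_index (fun i => by simp), Finsupp.sum]
  refine Finset.sum_congr rfl fun i hi => ?_
  rw [← pow_mul, Polynomial.toFinsupp_apply]
  rfl

/-- An element whose coefficients are `σ`-fixed and supported on multiples of `r` is central. -/
theorem comm_of_fixed (h : IsSkewPolyRing k σ R ι X) {r : ℕ} (hr : orderOf σ = r)
    {c : ℕ →₀ k} (hfix : ∀ t, σ (c t) = c t) (hdvd : ∀ t, c t ≠ 0 → r ∣ t) :
    ∀ z : R, skewHom ι X c * z = z * skewHom ι X c := by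
  -- commutes with ι a
  have hcomm_iota : ∀ a : k, skewHom ι X c * ι a = ι a * skewHom ι X c := by
    intro a
    rw [h.skewHom_mul_iota, h.iota_mul_skewHom]
    congr 1
    ext t
    rw [twist_apply, Finsupp.smul_apply, smul_eq_mul]
    by_cases hc : c t = 0
    · rw [hc, zero_mul, mul_zero]
    · obtain ⟨i, rfl⟩ := hdvd t hc
      have : (σ ^ (r * i)) a = a := by
        rw [pow_mul, ← hr, pow_orderOf_eq_one, one_pow]
        rfl
      rw [this, mul_comm]
  -- commutes with X
  have hcomm_X : skewHom ι X c * X = X * skewHom ι X c := by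
    rw [h.skewHom_mul_X, h.X_mul_skewHom]
    congr 1
    congr 1
    ext t
    rw [Finsupp.mapRange_apply, hfix]
  -- commutes with X ^ i
  have hcomm_Xpow : ∀ i : ℕ, skewHom ι X c * X ^ i = X ^ i * skewHom ι X c := by
    intro i
    induction i with
    | zero => simp
    | succ n ih => rw [pow_succ, ← mul_assoc, ih, mul_assoc, hcomm_X, ← mul_assoc]
  intro z
  rw [h.repr_spec z, skewHom_apply ι X (h.repr z), Finsupp.mul_sum, Finsupp.sum_mul]
  refine Finsupp.sum_congr fun i hi => ?_
  rw [← mul_assoc, hcomm_iota, mul_assoc, hcomm_Xpow, ← mul_assoc]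

theorem centralElt_comm (h : IsSkewPolyRing k σ R ι X) {r : ℕ} (hr : orderOf σ = r) (hr0 : 0 < r)
    (g : Polynomial (fixedSubfield σ)) :
    ∀ z : R, centralElt σ ι X r g * z = z * centralElt σ ι X r g := by
  rw [h.centralElt_eq hr0]
  exact h.comm_of_fixed hr (centralFinsupp_fixed hr0 g) (fun t => centralFinsupp_dvd g)

/-- Membership in the span of a central element. -/
theorem mem_span_central {N : R} (hN : ∀ z, N * z = z * N) {w : R}
    (hw : w ∈ TwoSidedIdeal.span {N}) : ∃ q, w = q * N := by
  classical
  have := TwoSidedIdeal.mem_span_iff.1 hw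
    (TwoSidedIdeal.mk' {w | ∃ q, w = q * N}
      ⟨0, by rw [zero_mul]⟩
      (fun {x y} ⟨q1, h1⟩ ⟨q2, h2⟩ => ⟨q1 + q2, by rw [h1, h2, add_mul]⟩)
      (fun {x} ⟨q, h1⟩ => ⟨-q, by rw [h1, neg_mul]⟩)
      (fun {x y} ⟨q, h1⟩ => ⟨x * q, by rw [h1, mul_assoc]⟩)
      (fun {x y} ⟨q, h1⟩ => ⟨q * y, by rw [h1, mul_assoc, mul_assoc, hN y]⟩))
    (by rintro x hx; rw [Set.mem_singleton_iff] at hx; subst hx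
        rw [SetLike.mem_coe, TwoSidedIdeal.mem_mk']; exact ⟨1, (one_mul x).symm⟩)
  rwa [TwoSidedIdeal.mem_mk'] at this

end IsSkewPolyRing
namespace SkewAux

lemma coeff_zero_ne {K : Type*} [Field K] {f : Polynomial K}
    (hmon : f.Monic) (hirr : Irreducible f) (hne : f ≠ Polynomial.X) : f.coeff 0 ≠ 0 := by
  intro h0
  obtain ⟨g, hg⟩ := Polynomial.X_dvd_iff.2 h0
  rcases hirr.isUnit_or_isUnit hg with hu | hu
  · exact Polynomial.not_isUnit_X hu
  · obtain ⟨u, hu2⟩ := Polynomial.isUnit_iff.1 hu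
    apply hne
    have hf : f = Polynomial.X * Polynomial.C u := by rw [hg, hu2.2]
    have : u = 1 := by
      have := hmon
      rw [hf] at this
      have h1 := this.coeff_natDegree
      simpa using h1
    rw [hf, this, map_one, mul_one]

end SkewAux

namespace IsSkewPolyRing

open SkewAux

variable {k : Type*} [Field k] {σ : k ≃+* k} {R : Type*} [Ring R] {ι : k →+* R} {X : R}

theorem repr_centralElt (h : IsSkewPolyRing k σ R ι X) {r : ℕ} (hr0 : 0 < r)
    (g : Polynomial (fixedSubfield σ)) :
    h.repr (centralElt σ ι X r g) = centralFinsupp σ r g :=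
  h.repr_eq (h.centralElt_eq hr0 g)

theorem centralFinsupp_top {r : ℕ} (hr0 : 0 < r) {f : Polynomial (fixedSubfield σ)}
    (hmon : f.Monic) : centralFinsupp σ r f (r * f.natDegree) = 1 := by
  rw [centralFinsupp_apply_mul hr0, hmon.coeff_natDegree]
  rfl

theorem small_eq_zero (h : IsSkewPolyRing k σ R ι X) {r : ℕ} (hr : orderOf σ = r) (hr0 : 0 < r)
    {f : Polynomial (fixedSubfield σ)} (hmon : f.Monic) (h00 : (f.coeff 0 : k) ≠ 0)
    {w : R} (hw : w ∈ TwoSidedIdeal.span {centralElt σ ι X r f})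
    (hsmall : ∀ j, r * f.natDegree < j → h.repr w j = 0)
    (hzero : h.repr w 0 = 0) : w = 0 := by
  obtain ⟨q, rfl⟩ := mem_span_central (h.centralElt_comm hr hr0 f) hw
  by_cases hq : q = 0
  · rw [hq, zero_mul]
  · exfalso
    have hc : h.repr q ≠ 0 := fun hc0 => hq (h.eq_zero_of_repr hc0)
    have hsupp : (h.repr q).support.Nonempty := by
      rw [Finsupp.support_nonempty_iff]; exact hc
    set m := (h.repr q).support.max' hsupp with hm
    have hcb : ∀ i, m < i → h.repr q i = 0 := by
      intro i hi
      by_contra hx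
      exact absurd (Finset.le_max' _ i (Finsupp.mem_support_iff.2 hx)) (by omega)
    have hcm : h.repr q m ≠ 0 :=
      Finsupp.mem_support_iff.1 ((h.repr q).support.max'_mem hsupp)
    have hrepr : h.repr (q * centralElt σ ι X r f)
        = conv σ (h.repr q) (centralFinsupp σ r f) := by
      rw [h.repr_mul, h.repr_centralElt hr0]
    have hEb : ∀ j, r * f.natDegree < j → centralFinsupp σ r f j = 0 :=
      fun j hj => centralFinsupp_bound hr0 f j hj
    by_cases hm0 : m = 0
    · -- constant coefficient is nonzero, contradiction
      apply absurd hzero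
      rw [hrepr, conv_apply_zero]
      have hq0 : h.repr q 0 ≠ 0 := by rw [← hm0]; exact hcm
      have hE0 : centralFinsupp σ r f 0 ≠ 0 := by
        have : centralFinsupp σ r f (r * 0) = (f.coeff 0 : k) :=
          centralFinsupp_apply_mul hr0 f 0
        rw [mul_zero] at this
        rw [this]
        exact h00
      exact mul_ne_zero hq0 hE0
    · -- top coefficient is nonzero, contradiction
      have htop := hsmall (m + r * f.natDegree) (by omega)
      rw [hrepr, conv_apply_top hcb hEb, centralFinsupp_top hr0 hmon, map_one, mul_one] at htop
      exact hcm htop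

theorem div_monic (h : IsSkewPolyRing k σ R ι X) {r : ℕ} (hr : orderOf σ = r) (hr0 : 0 < r)
    {f : Polynomial (fixedSubfield σ)} (hmon : f.Monic) (hd0 : 0 < f.natDegree)
    (m : ℕ) : ∀ y : R, (∀ i, m < i → h.repr y i = 0) →
    ∃ z rho : R, y = z + rho ∧ z ∈ TwoSidedIdeal.span {centralElt σ ι X r f} ∧
      ∀ i, r * f.natDegree ≤ i → h.repr rho i = 0 := by
  induction m using Nat.strong_induction_on with
  | _ m ih =>
    intro y hy
    by_cases hmlt : m < r * f.natDegree
    · exact ⟨0, y, (zero_add y).symm, zero_mem _,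
        fun i hi => hy i (lt_of_lt_of_le hmlt hi)⟩
    · push_neg at hmlt
      set n := r * f.natDegree with hn
      have hn0 : 0 < n := Nat.mul_pos hr0 hd0
      set a := h.repr y m with ha
      set T := skewHom ι X (Finsupp.single (m - n) a) * centralElt σ ι X r f with hT
      have hTmem : T ∈ TwoSidedIdeal.span {centralElt σ ι X r f} :=
        TwoSidedIdeal.mul_mem_left _ _ _ (TwoSidedIdeal.subset_span rfl)
      have hsb : ∀ i, m - n < i → Finsupp.single (m - n) a i = 0 := by
        intro i hi
        rw [Finsupp.single_apply, if_neg (by omega)]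
      have hEb : ∀ j, n < j → centralFinsupp σ r f j = 0 :=
        fun j hj => centralFinsupp_bound hr0 f j hj
      have hreprT : h.repr T = conv σ (Finsupp.single (m - n) a) (centralFinsupp σ r f) := by
        rw [hT, h.repr_mul, h.repr_skewHom, h.repr_centralElt hr0]
      have hTb : ∀ j, m < j → h.repr T j = 0 := by
        intro j hj
        rw [hreprT]
        exact conv_apply_bound hsb hEb (by omega)
      have hTm : h.repr T m = a := by
        have := conv_apply_top (σ := σ) hsb hEb
        rw [Nat.sub_add_cancel hmlt] at this
        rw [hreprT, this, centralFinsupp_top hr0 hmon, map_one, mul_one, Finsupp.single_apply,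
          if_pos rfl]
      have hy' : ∀ i, m - 1 < i → h.repr (y - T) i = 0 := by
        intro i hi
        rw [h.repr_sub, Finsupp.sub_apply]
        rcases Nat.lt_or_ge m i with hlt | hge
        · rw [hy i hlt, hTb i hlt, sub_zero]
        · have : i = m := by omega
          rw [this, hTm, ha, sub_self]
      obtain ⟨z', rho, h1, h2, h3⟩ := ih (m - 1) (by omega) (y - T) hy'
      exact ⟨z' + T, rho, by rw [add_assoc, add_comm T rho, ← add_assoc, ← h1]; abel,
        TwoSidedIdeal.add_mem _ h2 hTmem, h3⟩

end IsSkewPolyRing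
namespace IsSkewPolyRing

open SkewAux

variable {k : Type*} [Field k] {σ : k ≃+* k} {R : Type*} [Ring R] {ι : k →+* R} {X : R}

theorem repr_iota_mul (h : IsSkewPolyRing k σ R ι X) (a : k) (y : R) :
    h.repr (ι a * y) = a • h.repr y := by
  refine h.repr_eq ?_
  conv_lhs => rw [h.repr_spec y]
  rw [h.iota_mul_skewHom]

theorem repr_mul_iota (h : IsSkewPolyRing k σ R ι X) (a : k) (y : R) :
    h.repr (y * ι a) = twist σ a (h.repr y) := by
  refine h.repr_eq ?_
  conv_lhs => rw [h.repr_spec y]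
  rw [h.skewHom_mul_iota]

theorem repr_X_mul (h : IsSkewPolyRing k σ R ι X) (y : R) :
    h.repr (X * y) = shift ((h.repr y).mapRange σ (map_zero σ)) := by
  refine h.repr_eq ?_
  conv_lhs => rw [h.repr_spec y]
  rw [h.X_mul_skewHom]

theorem repr_mul_X (h : IsSkewPolyRing k σ R ι X) (y : R) :
    h.repr (y * X) = shift (h.repr y) := by
  refine h.repr_eq ?_
  conv_lhs => rw [h.repr_spec y]
  rw [h.skewHom_mul_X]

end IsSkewPolyRing
/-- If `N ∈ k^σ[X^r]` is monic irreducible and different from `X^r`, then the centre of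
the quotient ring `k[X,σ]/(N)` is exactly `E = k^σ[X^r]/(N)`, i.e. the image of
`k^σ[X^r]` in the quotient. -/
theorem center_skewPolyRing_quotient_eq
    {k R : Type*} [Field k] [Fintype k] [Ring R]
    (σ : k ≃+* k) (r : ℕ) (hr : orderOf σ = r) (ι : k →+* R) (X : R)
    (h : IsSkewPolyRing k σ R ι X) (f : Polynomial (fixedSubfield σ))
    (hmon : f.Monic) (hirr : Irreducible f) (hne : f ≠ Polynomial.X)
    (y : (TwoSidedIdeal.span {centralElt σ ι X r f}).ringCon.Quotient) :
    y ∈ Subring.center ((TwoSidedIdeal.span {centralElt σ ι X r f}).ringCon.Quotient) ↔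
      ∃ g : Polynomial (fixedSubfield σ),
        y = (TwoSidedIdeal.span {centralElt σ ι X r f}).ringCon.mk' (centralElt σ ι X r g) := by
  classical
  open SkewAux in
  haveI hfin : Finite (k ≃+* k) :=
    Finite.of_injective (fun e => (e : k → k)) DFunLike.coe_injective
  have hr0 : 0 < r := hr ▸ orderOf_pos σ
  have hd0 : 0 < f.natDegree := hirr.natDegree_pos
  have h00 : ((f.coeff 0 : fixedSubfield σ) : k) ≠ 0 := fun hc =>
    SkewAux.coeff_zero_ne hmon hirr hne (Subtype.ext hc)
  have hsurj : ∀ z : (TwoSidedIdeal.span {centralElt σ ι X r f}).ringCon.Quotient, ∃ v : R, (TwoSidedIdeal.span {centralElt σ ι X r f}).ringCon.mk' v = z := fun z =>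
    Quot.exists_rep z
  have hmk_eq : ∀ {a b : R}, a - b ∈ TwoSidedIdeal.span {centralElt σ ι X r f} → (TwoSidedIdeal.span {centralElt σ ι X r f}).ringCon.mk' a = (TwoSidedIdeal.span {centralElt σ ι X r f}).ringCon.mk' b := by
    intro a b hab
    exact (RingCon.eq _).2 ((TwoSidedIdeal.rel_iff _ a b).2 hab)
  have hmk_mem : ∀ {a b : R}, (TwoSidedIdeal.span {centralElt σ ι X r f}).ringCon.mk' a = (TwoSidedIdeal.span {centralElt σ ι X r f}).ringCon.mk' b → a - b ∈ TwoSidedIdeal.span {centralElt σ ι X r f} := by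
    intro a b hab
    exact (TwoSidedIdeal.rel_iff _ a b).1 ((RingCon.eq _).1 hab)
  constructor
  · -- the hard direction
    intro hy
    obtain ⟨P0, hP0⟩ := hsurj y
    have hb : ∀ i, ((h.repr P0).support.sup id) < i → h.repr P0 i = 0 := by
      intro i hi
      by_contra hx
      have hle := Finset.le_sup (f := id) (Finsupp.mem_support_iff.2 hx)
      simp only [id] at hle
      omega
    obtain ⟨z, P, h1, h2, h3⟩ := h.div_monic hr hr0 hmon hd0 _ P0 hb
    have hyP : (TwoSidedIdeal.span {centralElt σ ι X r f}).ringCon.mk' P = y := by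
      rw [← hP0, h1, map_add]
      have hz0 : (TwoSidedIdeal.span {centralElt σ ι X r f}).ringCon.mk' z = 0 := by
        rw [← map_zero ((TwoSidedIdeal.span {centralElt σ ι X r f}).ringCon.mk')]
        exact hmk_eq (by simpa using h2)
      rw [hz0, zero_add]
    set c := h.repr P with hc
    have hcomm := Subring.mem_center_iff.1 hy
    -- commutation with the scalars
    have key_iota : ∀ (a : k) (j : ℕ), a * c j = c j * (σ ^ j) a := by
      intro a j
      have hD : ι a * P - P * ι a ∈ TwoSidedIdeal.span {centralElt σ ι X r f} := by
        apply hmk_mem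
        rw [map_mul, map_mul, hyP]
        exact hcomm ((TwoSidedIdeal.span {centralElt σ ι X r f}).ringCon.mk' (ι a))
      have hDrepr : ∀ j, h.repr (ι a * P - P * ι a) j = a * c j - c j * (σ ^ j) a := by
        intro j
        rw [h.repr_sub, Finsupp.sub_apply, h.repr_iota_mul, h.repr_mul_iota,
          Finsupp.smul_apply, smul_eq_mul, SkewAux.twist_apply]
      have hD0 : ι a * P - P * ι a = 0 := by
        refine h.small_eq_zero hr hr0 hmon h00 hD (fun j hj => ?_) ?_
        · rw [hDrepr, h3 j (le_of_lt hj), mul_zero, zero_mul, sub_zero]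
        · rw [hDrepr]
          have hσ0 : (σ ^ 0) a = a := by rw [pow_zero]; rfl
          rw [hσ0, mul_comm, sub_self]
      have := hDrepr j
      rw [hD0, h.repr_zero] at this
      have := this.symm
      rwa [Finsupp.coe_zero, Pi.zero_apply, sub_eq_zero] at this
    have hdvd : ∀ j, c j ≠ 0 → r ∣ j := by
      intro j hcj
      have hpow : σ ^ j = 1 := by
        refine RingEquiv.ext fun a => ?_
        have := key_iota a j
        rw [mul_comm a (c j)] at this
        have := mul_left_cancel₀ hcj this
        rw [← this]
        rfl
      exact hr ▸ orderOf_dvd_of_pow_eq_one hpow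
    -- commutation with X
    have hfix : ∀ j, σ (c j) = c j := by
      intro j
      have hD : X * P - P * X ∈ TwoSidedIdeal.span {centralElt σ ι X r f} := by
        apply hmk_mem
        rw [map_mul, map_mul, hyP]
        exact hcomm ((TwoSidedIdeal.span {centralElt σ ι X r f}).ringCon.mk' X)
      have hDrepr : ∀ j, h.repr (X * P - P * X) (j + 1) = σ (c j) - c j := by
        intro j
        rw [h.repr_sub, Finsupp.sub_apply, h.repr_X_mul, h.repr_mul_X,
          SkewAux.shift_apply_succ, SkewAux.shift_apply_succ, Finsupp.mapRange_apply]
      have hD0repr : h.repr (X * P - P * X) 0 = 0 := by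
        rw [h.repr_sub, Finsupp.sub_apply, h.repr_X_mul, h.repr_mul_X,
          SkewAux.shift_apply_zero, SkewAux.shift_apply_zero, sub_self]
      have hD0 : X * P - P * X = 0 := by
        refine h.small_eq_zero hr hr0 hmon h00 hD (fun j hj => ?_) hD0repr
        have hn0 : 0 < r * f.natDegree := Nat.mul_pos hr0 hd0
        obtain ⟨i, rfl⟩ : ∃ i, j = i + 1 := ⟨j - 1, by omega⟩
        rw [hDrepr, h3 i (by omega), map_zero, sub_self]
      have := hDrepr j
      rw [hD0, h.repr_zero] at this
      have := this.symm
      rwa [Finsupp.coe_zero, Pi.zero_apply, sub_eq_zero] at this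
    -- build the polynomial g
    refine ⟨Polynomial.ofFinsupp (AddMonoidAlgebra.ofCoeff (Finsupp.onFinset (c.support.image (· / r))
      (fun i => (⟨c (r * i), hfix _⟩ : fixedSubfield σ)) (fun i hi => ?_))), ?_⟩
    · have hne0 : c (r * i) ≠ 0 := fun h0 => hi (Subtype.ext h0)
      exact Finset.mem_image.2 ⟨r * i, Finsupp.mem_support_iff.2 hne0,
        Nat.mul_div_cancel_left i hr0⟩
    · rw [← hyP]
      congr 1
      rw [h.centralElt_eq hr0]
      conv_lhs => rw [h.repr_spec P]
      congr 1
      ext t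
      by_cases hdt : r ∣ t
      · obtain ⟨i, rfl⟩ := hdt
        rw [SkewAux.centralFinsupp_apply_mul hr0, Polynomial.coeff_ofFinsupp,
          AddMonoidAlgebra.coeff_ofCoeff, Finsupp.onFinset_apply]
      · rw [SkewAux.centralFinsupp_apply_not_dvd _ hdt]
        exact not_not.1 (mt (hdvd t) hdt)
  · -- the easy direction
    rintro ⟨g, rfl⟩
    rw [Subring.mem_center_iff]
    intro z
    obtain ⟨v, rfl⟩ := hsurj z
    rw [← map_mul, ← map_mul, h.centralElt_comm hr hr0 g v]
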